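/- Let p_v ≥ 1, p_c ≥ 1, d > 0, R ≥ 0 be real numbers with R/d = p_c/(1+p_v·p_c). Then the set of Nash equilibria of the two-miner mining game is exactly {(1,1)} ∪ { (0, γ) : 0 ≤ γ ≤ g2(p_c/(1+p_v·p_c)) }, i.e., either both miners do not participate with probability 1, or miner 1 participates with probability 1 and miner 2 does not participate with any probability γ ∈ [0, g2(p_c/(1+p_v·p_c))]. -/

import Mathlib

/-- Expected payoff of miner 1; `x1`, `x2` are the probabilities that
miners 1 and 2 do NOT participate in mining. -/
noncomputable def u1 (pv pc d R x1 x2 : ℝ) : ℝ :=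
  (1 - x1) * (x2 * (R - d) +
    (1 - x2) * (1 / (1 + pv * pc)) * (R - d / (1 + pv * pc)))

/-- Expected payoff of miner 2. -/
noncomputable def u2 (pv pc d R x1 x2 : ℝ) : ℝ :=
  (1 - x2) * (x1 * (R - d / pv) +
    (1 - x1) * (pv * pc / (1 + pv * pc)) * (R - d * pc / (1 + pv * pc)))

/-- `p = (x1, x2) ∈ [0,1]²` is a (mixed) Nash equilibrium of the
two-miner mining game. -/
def IsNashEq (pv pc d R : ℝ) (p : ℝ × ℝ) : Prop :=
  p.1 ∈ Set.Icc (0 : ℝ) 1 ∧ p.2 ∈ Set.Icc (0 : ℝ) 1 ∧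
  (∀ y ∈ Set.Icc (0 : ℝ) 1, u1 pv pc d R p.1 p.2 ≥ u1 pv pc d R y p.2) ∧
  (∀ y ∈ Set.Icc (0 : ℝ) 1, u2 pv pc d R p.1 p.2 ≥ u2 pv pc d R p.1 y)

/-- The threshold function `g2`. -/
noncomputable def g2 (pv pc z : ℝ) : ℝ :=
  (z - 1 / (1 + pv * pc)) / (pv * pc * ((2 + pv * pc) / (1 + pv * pc) - z))

/-- If `R/d = pc/(1 + pv pc)` (with `pv ≥ 1`, `pc ≥ 1`), the Nash equilibria
are `(1,1)` together with all `(0, γ)` for `γ ∈ [0, g2(pc/(1 + pv pc))]`. -/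

private lemma aux_u1_formula (pv pc d : ℝ) (hS' : (1:ℝ) + pv * pc ≠ 0) :
    ∀ x1 x2 : ℝ, u1 pv pc d (d * pc / (1 + pv * pc)) x1 x2
      = (1 - x1) * (d / (1 + pv * pc)^2 * ((pc - 1) - x2 * (pv * pc * (2 + pv * pc - pc)))) := by
  intro x1 x2
  unfold u1
  have hS2 : (1:ℝ) + pc * pv ≠ 0 := by rwa [mul_comm]
  field_simp
  ring

private lemma aux_u2_formula (pv pc d : ℝ) (hpv : pv ≠ 0) (hS' : (1:ℝ) + pv * pc ≠ 0) :
    ∀ x1 x2 : ℝ, u2 pv pc d (d * pc / (1 + pv * pc)) x1 x2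
      = (1 - x2) * x1 * (-(d / ((1 + pv * pc) * pv))) := by
  intro x1 x2
  unfold u2
  have hS2 : (1:ℝ) + pc * pv ≠ 0 := by rwa [mul_comm]
  field_simp
  ring

set_option maxHeartbeats 1000000 in
theorem nash_eq_case_boundary_low
    (pv pc d R : ℝ) (hpv : 1 ≤ pv) (hpc : 1 ≤ pc) (hd : 0 < d) (hR : 0 ≤ R)
    (h : R / d = pc / (1 + pv * pc)) :
    {p : ℝ × ℝ | IsNashEq pv pc d R p}
      = {((1 : ℝ), (1 : ℝ))} ∪
        {p : ℝ × ℝ | p.1 = 0 ∧ p.2 ∈ Set.Icc 0 (g2 pv pc (pc / (1 + pv * pc)))} := by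
  have hpv0 : (0:ℝ) < pv := by linarith
  have hpc0 : (0:ℝ) < pc := by linarith
  have hS : (0:ℝ) < 1 + pv * pc := by nlinarith
  have hS' : (1:ℝ) + pv * pc ≠ 0 := hS.ne'
  have hP : (0:ℝ) < pv * pc := mul_pos hpv0 hpc0
  have hQ2 : (2:ℝ) ≤ 2 + pv * pc - pc := by
    nlinarith [mul_nonneg (show (0:ℝ) ≤ pc by linarith) (show (0:ℝ) ≤ pv - 1 by linarith)]
  have hD : (0:ℝ) < pv * pc * (2 + pv * pc - pc) := mul_pos hP (by linarith)
  have hDge : pc * 2 ≤ pv * pc * (2 + pv * pc - pc) := by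
    have h1 : pc ≤ pv * pc := by nlinarith
    exact mul_le_mul h1 hQ2 (by norm_num) hP.le
  have hfac : pc - 1 - 1 * (pv * pc * (2 + pv * pc - pc)) < 0 := by linarith
  have hRd : R = d * pc / (1 + pv * pc) := by
    rw [div_eq_div_iff hd.ne' hS'] at h
    rw [eq_div_iff hS']
    linarith
  subst hRd
  have hg2 : g2 pv pc (pc / (1 + pv * pc)) = (pc - 1) / (pv * pc * (2 + pv * pc - pc)) := by
    have hdenom : pv * pc * ((2 + pv * pc) / (1 + pv * pc) - pc / (1 + pv * pc)) ≠ 0 := by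
      have he : (2 + pv * pc) / (1 + pv * pc) - pc / (1 + pv * pc)
          = (2 + pv * pc - pc) / (1 + pv * pc) := by ring
      rw [he]
      exact (mul_pos hP (div_pos (by linarith) hS)).ne'
    rw [g2, div_eq_div_iff hdenom hD.ne']
    field_simp
  have hg2le1 : g2 pv pc (pc / (1 + pv * pc)) ≤ 1 := by
    rw [hg2, div_le_one hD]; linarith
  have hg2ge0 : 0 ≤ g2 pv pc (pc / (1 + pv * pc)) := by
    rw [hg2]
    exact div_nonneg (by linarith) hD.le
  have hu1 := aux_u1_formula pv pc d hS'
  have hu2 := aux_u2_formula pv pc d hpv0.ne' hS'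
  have hdpos : (0:ℝ) < d / (1 + pv * pc)^2 := by positivity
  have hneg : (0:ℝ) < d / ((1 + pv * pc) * pv) := by positivity
  ext ⟨x1, x2⟩
  simp only [Set.mem_setOf_eq, Set.mem_union, Set.mem_singleton_iff, Prod.mk.injEq,
    Set.mem_Icc]
  constructor
  · rintro ⟨hx1, hx2, h1, h2⟩
    simp only [Set.mem_Icc] at hx1 hx2
    by_cases hx10 : x1 = 0
    · right
      subst hx10
      refine ⟨rfl, hx2.1, ?_⟩
      have key := h1 1 ⟨zero_le_one, le_refl 1⟩
      rw [hu1, hu1] at key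
      simp only [sub_self, zero_mul, one_mul, sub_zero] at key
      rw [hg2, le_div_iff₀ hD]
      by_contra hcon
      push_neg at hcon
      nlinarith [mul_pos hdpos (show (0:ℝ) < x2 * (pv * pc * (2 + pv * pc - pc)) - (pc - 1)
        by linarith)]
    · left
      have hx1pos : 0 < x1 := lt_of_le_of_ne hx1.1 (Ne.symm hx10)
      have key2 := h2 1 ⟨zero_le_one, le_refl 1⟩
      rw [hu2, hu2] at key2
      have hx2eq : x2 = 1 := by
        by_contra hne
        have hlt : x2 < 1 := lt_of_le_of_ne hx2.2 hne
        nlinarith [mul_pos (mul_pos (show (0:ℝ) < 1 - x2 by linarith) hx1pos) hneg]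
      subst hx2eq
      have key1 := h1 1 ⟨zero_le_one, le_refl 1⟩
      rw [hu1, hu1] at key1
      have hx1eq : x1 = 1 := by
        by_contra hne
        have hlt : x1 < 1 := lt_of_le_of_ne hx1.2 hne
        nlinarith [mul_pos (mul_pos (show (0:ℝ) < 1 - x1 by linarith) hdpos)
          (show (0:ℝ) < 1 * (pv * pc * (2 + pv * pc - pc)) - (pc - 1) by linarith)]
      exact ⟨hx1eq, rfl⟩
  · rintro (⟨hx1, hx2⟩ | ⟨hx1, hx2a, hx2b⟩)
    · subst hx1; subst hx2
      refine ⟨by simp, by simp, ?_, ?_⟩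
      · intro y hy
        simp only [Set.mem_Icc] at hy
        dsimp only
        rw [hu1, hu1]
        nlinarith [mul_nonneg (show (0:ℝ) ≤ 1 - y by linarith)
          (mul_pos hdpos (show (0:ℝ) < 1 * (pv * pc * (2 + pv * pc - pc)) - (pc - 1)
            by linarith)).le]
      · intro y hy
        simp only [Set.mem_Icc] at hy
        dsimp only
        rw [hu2, hu2]
        nlinarith [mul_nonneg (show (0:ℝ) ≤ 1 - y by linarith) hneg.le]
    · subst hx1
      refine ⟨by simp, ⟨by simpa using hx2a, le_trans hx2b hg2le1⟩, ?_, ?_⟩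
      · intro y hy
        simp only [Set.mem_Icc] at hy
        dsimp only
        rw [hu1, hu1]
        have hA : 0 ≤ (pc - 1) - x2 * (pv * pc * (2 + pv * pc - pc)) := by
          rw [hg2, le_div_iff₀ hD] at hx2b
          linarith
        have h1y : 1 - y ≤ 1 - 0 := by linarith [hy.1]
        exact mul_le_mul_of_nonneg_right h1y (mul_nonneg hdpos.le hA)
      · intro y hy
        dsimp only
        rw [hu2, hu2]
        simp
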